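/- Fix a real z > 1 and set ω = z − √(z² − 1). For n, m ∈ ℕ define r_{n,m}(z) = (ω^{n+m+2} − ω^{|n−m|})/√(z² − 1). Then for every fixed m ∈ ℕ: (i) the sequence n ↦ r_{n,m}(z) is square-summable; (ii) (1/2)·r_{1,m}(z) − z·r_{0,m}(z) equals 1 if m = 0 and 0 otherwise, and for every n ≥ 1, (1/2)·(r_{n−1,m}(z) + r_{n+1,m}(z)) − z·r_{n,m}(z) equals 1 if n = m and 0 otherwise. In other words, r_{n,m}(z) is the kernel of the resolvent of the free half-line discrete Schrödinger operator H₊, given by (H₊f)_0 = f_1/2 and (H₊f)_n = (f_{n−1} + f_{n+1})/2 for n ≥ 1. -/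

import Mathlib

/-- The resolvent kernel `r_{n,m}(z) = (ω^{n+m+2} − ω^{|n−m|})/√(z² − 1)`
of the free half-line discrete Schrödinger operator, with `ω = z − √(z² − 1)`. -/
noncomputable def resKernel (z : ℝ) (n m : ℕ) : ℝ :=
  ((z - Real.sqrt (z ^ 2 - 1)) ^ (n + m + 2) -
      (z - Real.sqrt (z ^ 2 - 1)) ^ ((n : ℤ) - (m : ℤ)).natAbs) /
    Real.sqrt (z ^ 2 - 1)

/-- For fixed `m`, the sequence `n ↦ r_{n,m}(z)` is square-summable and satisfies
`(H₊ − z) r_{·,m} = e_m` componentwise, i.e. it is the kernel of the resolvent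
of the free half-line discrete Schrödinger operator. -/
theorem stmt1 (z : ℝ) (hz : 1 < z) (m : ℕ) :
    Summable (fun n : ℕ => (resKernel z n m) ^ 2) ∧
    ((1 / 2) * resKernel z 1 m - z * resKernel z 0 m =
      if m = 0 then 1 else 0) ∧
    (∀ n : ℕ, 1 ≤ n →
      (1 / 2) * (resKernel z (n - 1) m + resKernel z (n + 1) m) - z * resKernel z n m =
        if n = m then 1 else 0) := by
  have hz2 : (0:ℝ) < z^2 - 1 := by nlinarith
  set s := Real.sqrt (z^2 - 1) with hs
  have hs2 : s^2 = z^2 - 1 := Real.sq_sqrt hz2.le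
  have hspos : 0 < s := Real.sqrt_pos.mpr hz2
  set ω := z - s with hω
  have hωpos : 0 < ω := by nlinarith
  have hωlt : ω < 1 := by nlinarith
  have key : ω^2 - 2*z*ω + 1 = 0 := by rw [hω]; nlinarith
  have hωs : z - ω = s := by rw [hω]; ring
  have hres : ∀ a b : ℕ, resKernel z a b = (ω^(a+b+2) - ω^(((a:ℤ) - (b:ℤ)).natAbs))/s := by
    intro a b
    unfold resKernel
    rw [← hs, ← hω]
  clear_value ω s
  have L2 : ∀ a c e : ℝ, (1/2)*a - z*c = e*s → (1/2)*(a/s) - z*(c/s) = e := by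
    intro a c e h
    field_simp
    linear_combination 2*h
  have L3 : ∀ a b c e : ℝ, (1/2)*(a + b) - z*c = e*s → (1/2)*(a/s + b/s) - z*(c/s) = e := by
    intro a b c e h
    field_simp
    linear_combination 2*h
  refine ⟨?_, ?_, ?_⟩
  · -- summability
    have hgeo : Summable (fun n : ℕ => ((1 + (1/ω)^m)/s)^2 * (ω^2)^n) :=
      (summable_geometric_of_lt_one (by positivity) (by nlinarith)).mul_left _
    apply Summable.of_nonneg_of_le (fun n => sq_nonneg _) (fun n => ?_) hgeo
    set C := (1 + (1/ω)^m)/s with hC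
    have hCpos : 0 < C := by positivity
    have habs : |resKernel z n m| ≤ C * ω^n := by
      rw [hres]
      set a := (((n:ℤ) - (m:ℤ)).natAbs) with ha
      have hB : ω^a * ω^m ≤ ω^n := by
        rw [← pow_add]
        exact pow_le_pow_of_le_one hωpos.le hωlt.le (by omega)
      have hB2 : ω^a ≤ ω^n * (1/ω)^m := by
        have h1 : ω^a ≤ ω^n / ω^m := (le_div_iff₀ (by positivity)).mpr hB
        calc ω^a ≤ ω^n / ω^m := h1
          _ = ω^n * (1/ω)^m := by rw [div_pow]; ring
      have hA : ω^(n+m+2) ≤ ω^n := pow_le_pow_of_le_one hωpos.le hωlt.le (by omega)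
      have h1 : |ω^(n+m+2) - ω^a| ≤ ω^n + ω^n * (1/ω)^m := by
        calc |ω^(n+m+2) - ω^a| ≤ |ω^(n+m+2)| + |ω^a| := abs_sub _ _
          _ = ω^(n+m+2) + ω^a := by rw [abs_of_pos (by positivity), abs_of_pos (by positivity)]
          _ ≤ ω^n + ω^n * (1/ω)^m := add_le_add hA hB2
      rw [abs_div, abs_of_pos hspos]
      rw [div_le_iff₀ hspos] at *
      calc |ω^(n+m+2) - ω^a| ≤ ω^n + ω^n * (1/ω)^m := h1
        _ = C * ω^n * s := by rw [hC]; field_simp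
    calc (resKernel z n m)^2 = |resKernel z n m|^2 := (sq_abs _).symm
      _ ≤ (C * ω^n)^2 := by
          apply pow_le_pow_left₀ (abs_nonneg _) habs _
      _ = C^2 * (ω^2)^n := by ring
  · -- n = 0 equation
    rw [hres, hres]
    rcases m with _ | k
    · have h1 : (((1:ℕ):ℤ) - ((0:ℕ):ℤ)).natAbs = 1 := by omega
      have h0 : (((0:ℕ):ℤ) - ((0:ℕ):ℤ)).natAbs = 0 := by omega
      rw [h1, h0, if_pos rfl]
      apply L2
      rw [one_mul]
      linear_combination (ω/2) * key + hωs
    · have h1 : (((1:ℕ):ℤ) - ((k+1:ℕ):ℤ)).natAbs = k := by omega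
      have h0 : (((0:ℕ):ℤ) - ((k+1:ℕ):ℤ)).natAbs = k+1 := by omega
      rw [h1, h0, if_neg (by omega)]
      apply L2
      rw [zero_mul]
      linear_combination (ω^(k+2)/2 - ω^k/2) * key
  · -- n ≥ 1 equations
    rintro n hn
    obtain ⟨n', rfl⟩ : ∃ n', n = n' + 1 := ⟨n - 1, by omega⟩
    have hsub : n' + 1 - 1 = n' := by omega
    rw [hsub, hres, hres, hres]
    rcases lt_trichotomy (n' + 1) m with h | h | h
    · obtain ⟨d, rfl⟩ : ∃ d, m = n' + d + 2 := ⟨m - n' - 2, by omega⟩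
      have e1 : (((n':ℕ):ℤ) - ((n' + d + 2:ℕ):ℤ)).natAbs = d + 2 := by omega
      have e2 : (((n'+1+1:ℕ):ℤ) - ((n' + d + 2:ℕ):ℤ)).natAbs = d := by omega
      have e3 : (((n'+1:ℕ):ℤ) - ((n' + d + 2:ℕ):ℤ)).natAbs = d + 1 := by omega
      rw [e1, e2, e3, if_neg (by omega)]
      apply L3
      rw [zero_mul]
      linear_combination (ω^(n'+(n'+d+2)+2)/2 - ω^d/2) * key
    · subst h
      have e1 : (((n':ℕ):ℤ) - ((n' + 1:ℕ):ℤ)).natAbs = 1 := by omega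
      have e2 : (((n'+1+1:ℕ):ℤ) - ((n' + 1:ℕ):ℤ)).natAbs = 1 := by omega
      have e3 : (((n'+1:ℕ):ℤ) - ((n' + 1:ℕ):ℤ)).natAbs = 0 := by omega
      rw [e1, e2, e3, if_pos rfl]
      apply L3
      rw [one_mul]
      linear_combination (ω^(n'+(n'+1)+2)/2) * key + hωs
    · obtain ⟨d, rfl⟩ : ∃ d, n' = m + d := ⟨n' - m, by omega⟩
      have e1 : (((m+d:ℕ):ℤ) - ((m:ℕ):ℤ)).natAbs = d := by omega
      have e2 : (((m+d+1+1:ℕ):ℤ) - ((m:ℕ):ℤ)).natAbs = d + 2 := by omega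
      have e3 : (((m+d+1:ℕ):ℤ) - ((m:ℕ):ℤ)).natAbs = d + 1 := by omega
      rw [e1, e2, e3, if_neg (by omega)]
      apply L3
      rw [zero_mul]
      linear_combination (ω^(m+d+m+2)/2 - ω^d/2) * key
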